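/- Let a : (0,∞) → [0,∞) be measurable and essentially bounded on (0,1], let b be a daughter distribution function, let i > 1, ω > 0, and suppose there is δ > 0 with N_i(x) ≥ δ x^i for a.e. x ≥ 1. Then for every measurable f : (0,∞) → [0,∞) with ∫₀^∞ (a(x)+1) x^i f(x) dx < ∞, one has ∫₀^∞ x^i (Ff)(x) dx = −∫₀^∞ N_i(x) a(x) f(x) dx ≤ −δ ∫₀^∞ (a(x)+ω) x^i f(x) dx + ω₁ ∫₀^∞ x^i f(x) dx, where ω₁ = δ·ess sup_{0<x≤1} a(x) + ω(1+δ). -/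

import Mathlib

open MeasureTheory Set Filter
open scoped ENNReal

/-- `n_m(y) = ∫₀^y x^m b(x,y) dx`. -/
noncomputable def nmom (b : ℝ → ℝ → ℝ) (m y : ℝ) : ℝ :=
  ∫ x in Set.Ioo 0 y, x ^ m * b x y

/-- `N_m(y) = y^m − n_m(y)`. -/
noncomputable def Nmom (b : ℝ → ℝ → ℝ) (m y : ℝ) : ℝ :=
  y ^ m - nmom b m y

/-- The fragmentation operator `(Ff)(x) = −a(x) f(x) + ∫ₓ^∞ a(y) b(x,y) f(y) dy`. -/
noncomputable def fragOp (a : ℝ → ℝ) (b : ℝ → ℝ → ℝ) (f : ℝ → ℝ) (x : ℝ) : ℝ :=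
  -(a x * f x) + ∫ y in Set.Ioi x, a y * b x y * f y

section aux

variable {b : ℝ → ℝ → ℝ} {i : ℝ}

lemma meas_b_left (hb : Measurable (Function.uncurry b)) (y : ℝ) :
    Measurable fun x => b x y :=
  hb.comp (measurable_id.prodMk measurable_const)

lemma meas_b_right (hb : Measurable (Function.uncurry b)) (x : ℝ) :
    Measurable fun y => b x y :=
  hb.comp (measurable_const.prodMk measurable_id)

lemma integrable_xb (hb : Measurable (Function.uncurry b))
    (hm : ∀ y : ℝ, 0 < y → ∫ x in Set.Ioo 0 y, x * b x y = y) {y : ℝ} (hy : 0 < y) :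
    Integrable (fun x => x * b x y) (volume.restrict (Set.Ioo 0 y)) := by
  by_contra h
  have := hm y hy
  rw [integral_undef h] at this
  exact hy.ne' this.symm

lemma pt_bound (hi : 1 ≤ i) (hbn : ∀ x y, 0 ≤ b x y) {y : ℝ} :
    ∀ x ∈ Set.Ioo (0:ℝ) y, x ^ i * b x y ≤ y ^ (i-1) * (x * b x y) := by
  intro x hx
  have hx0 : (0:ℝ) < x := hx.1
  have hxy : x ≤ y := hx.2.le
  have h1 : x ^ i = x ^ (i-1) * x := by
    have h := Real.rpow_add hx0 (i-1) 1
    rw [Real.rpow_one] at h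
    simpa using h
  have h2 : x ^ (i-1) ≤ y ^ (i-1) := by
    exact Real.rpow_le_rpow hx0.le hxy (by linarith)
  have h3 : 0 ≤ x * b x y := mul_nonneg hx0.le (hbn x y)
  calc x ^ i * b x y = x ^ (i-1) * (x * b x y) := by rw [h1]; ring
    _ ≤ y ^ (i-1) * (x * b x y) := mul_le_mul_of_nonneg_right h2 h3

lemma nmom_nonneg (hbn : ∀ x y, 0 ≤ b x y) (y : ℝ) : 0 ≤ nmom b i y :=
  setIntegral_nonneg measurableSet_Ioo fun x hx =>
    mul_nonneg (Real.rpow_nonneg hx.1.le i) (hbn x y)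

lemma nmom_le (hi : 1 ≤ i) (hb : Measurable (Function.uncurry b))
    (hbn : ∀ x y, 0 ≤ b x y)
    (hm : ∀ y : ℝ, 0 < y → ∫ x in Set.Ioo 0 y, x * b x y = y) {y : ℝ} (hy : 0 < y) :
    nmom b i y ≤ y ^ i := by
  have hint := integrable_xb hb hm hy
  have key : nmom b i y ≤ ∫ x in Set.Ioo 0 y, y ^ (i-1) * (x * b x y) := by
    refine integral_mono_of_nonneg ?_ (hint.const_mul _) ?_
    · exact (ae_restrict_mem measurableSet_Ioo).mono fun x hx =>
        mul_nonneg (Real.rpow_nonneg hx.1.le i) (hbn x y)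
    · exact (ae_restrict_mem measurableSet_Ioo).mono (pt_bound hi hbn)
  rw [integral_const_mul, hm y hy] at key
  have h1 : y ^ (i-1) * y = y ^ i := by
    have h := Real.rpow_add hy (i-1) 1
    rw [Real.rpow_one] at h
    simpa using h.symm
  linarith [key]

lemma Nmom_nonneg (hi : 1 ≤ i) (hb : Measurable (Function.uncurry b))
    (hbn : ∀ x y, 0 ≤ b x y)
    (hm : ∀ y : ℝ, 0 < y → ∫ x in Set.Ioo 0 y, x * b x y = y) {y : ℝ} (hy : 0 < y) :
    0 ≤ Nmom b i y :=
  sub_nonneg.mpr (nmom_le hi hb hbn hm hy)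

lemma Nmom_le (hbn : ∀ x y, 0 ≤ b x y) (y : ℝ) : Nmom b i y ≤ y ^ i := by
  have := nmom_nonneg (i := i) hbn y
  simp only [Nmom]; linarith

lemma integrable_xib (hi : 1 ≤ i) (hb : Measurable (Function.uncurry b))
    (hbn : ∀ x y, 0 ≤ b x y)
    (hm : ∀ y : ℝ, 0 < y → ∫ x in Set.Ioo 0 y, x * b x y = y) {y : ℝ} (hy : 0 < y) :
    Integrable (fun x => x ^ i * b x y) (volume.restrict (Set.Ioo 0 y)) := by
  refine ((integrable_xb hb hm hy).const_mul (y ^ (i-1))).mono' ?_ ?_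
  · exact ((by fun_prop : Measurable fun x : ℝ => x ^ i).mul
      (meas_b_left hb y)).aestronglyMeasurable
  · exact (ae_restrict_mem measurableSet_Ioo).mono fun x hx => by
      rw [Real.norm_eq_abs, abs_of_nonneg (mul_nonneg (Real.rpow_nonneg hx.1.le i) (hbn x y))]
      exact pt_bound hi hbn x hx

/-- `nmom b i` is strongly measurable. -/
lemma sm_nmom (hb : Measurable (Function.uncurry b)) :
    StronglyMeasurable (fun y => nmom b i y) := by
  have hg : StronglyMeasurable fun q : ℝ × ℝ =>
      Set.indicator {q : ℝ × ℝ | 0 < q.2 ∧ q.2 < q.1}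
        (fun q => q.2 ^ i * b q.2 q.1) q := by
    refine (Measurable.indicator ?_ ?_).stronglyMeasurable
    · exact ((by fun_prop : Measurable fun q : ℝ × ℝ => q.2 ^ i)).mul
        (hb.comp (measurable_snd.prodMk measurable_fst))
    · exact (measurableSet_lt measurable_const measurable_snd).inter
        (measurableSet_lt measurable_snd measurable_fst)
  have h2 := hg.integral_prod_right' (ν := (volume : Measure ℝ))
  have heq : (fun y => nmom b i y)
      = fun y => ∫ x, Set.indicator {q : ℝ × ℝ | 0 < q.2 ∧ q.2 < q.1}
          (fun q => q.2 ^ i * b q.2 q.1) (y, x) := by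
    funext y
    rw [nmom, ← integral_indicator measurableSet_Ioo]
    congr 1
  rw [heq]
  exact h2

end aux

/-- the `i`-th moment estimate for the fragmentation operator:
`∫₀^∞ x^i (Ff)(x) dx = −∫₀^∞ N_i(x) a(x) f(x) dx
  ≤ −δ ∫₀^∞ (a(x)+ω) x^i f(x) dx + ω₁ ∫₀^∞ x^i f(x) dx`,
with `ω₁ = δ · ess sup_{0<x≤1} a(x) + ω(1+δ)`. -/
theorem stmt15 (a : ℝ → ℝ) (b : ℝ → ℝ → ℝ) (i ω δ : ℝ) (f : ℝ → ℝ)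
    (ha_meas : Measurable a) (ha_nonneg : ∀ x, 0 ≤ a x)
    (ha_bdd : Filter.IsBoundedUnder (· ≤ ·)
      (MeasureTheory.ae (volume.restrict (Set.Ioc (0:ℝ) 1))) a)
    (hb_meas : Measurable (Function.uncurry b))
    (hb_nonneg : ∀ x y, 0 ≤ b x y)
    (hb_supp : ∀ y : ℝ, 0 < y → ∀ᵐ x ∂(volume : Measure ℝ), y < x → b x y = 0)
    (hb_mass : ∀ y : ℝ, 0 < y → ∫ x in Set.Ioo 0 y, x * b x y = y)
    (hi : 1 < i) (hω : 0 < ω) (hδ : 0 < δ)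
    (hN : ∀ᵐ x ∂(volume.restrict (Set.Ici (1:ℝ))), δ * x ^ i ≤ Nmom b i x)
    (hf_meas : Measurable f) (hf_nonneg : ∀ x, 0 ≤ f x)
    (hf_int : ∫⁻ x in Set.Ioi (0:ℝ), ENNReal.ofReal ((a x + 1) * x ^ i * f x) < ∞) :
    (∫ x in Set.Ioi (0:ℝ), x ^ i * fragOp a b f x
        = -∫ x in Set.Ioi (0:ℝ), Nmom b i x * a x * f x) ∧
    (-∫ x in Set.Ioi (0:ℝ), Nmom b i x * a x * f x)
      ≤ -(δ * ∫ x in Set.Ioi (0:ℝ), (a x + ω) * x ^ i * f x)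
        + (δ * essSup a (volume.restrict (Set.Ioc (0:ℝ) 1)) + ω * (1 + δ)) *
            ∫ x in Set.Ioi (0:ℝ), x ^ i * f x := by
  have hi1 : (1:ℝ) ≤ i := hi.le
  have hmx : Measurable fun x : ℝ => x ^ i := by fun_prop
  -- integrability helper
  have int_helper : ∀ g : ℝ → ℝ, AEStronglyMeasurable g (volume.restrict (Set.Ioi (0:ℝ))) →
      (∀ᵐ x ∂(volume.restrict (Set.Ioi (0:ℝ))), 0 ≤ g x) → (∀ᵐ x ∂(volume.restrict (Set.Ioi (0:ℝ))), g x ≤ (a x + 1) * x ^ i * f x) →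
      Integrable g (volume.restrict (Set.Ioi (0:ℝ))) := by
    intro g hgm hg0 hgle
    refine ⟨hgm, ?_⟩
    rw [hasFiniteIntegral_iff_ofReal hg0]
    exact lt_of_le_of_lt
      (lintegral_mono_ae (hgle.mono fun x hx => ENNReal.ofReal_le_ofReal hx)) hf_int
  have hx_ae : ∀ᵐ x ∂(volume.restrict (Set.Ioi (0:ℝ))), x ∈ Set.Ioi (0:ℝ) := ae_restrict_mem measurableSet_Ioi
  -- basic integrability facts
  have I1 : Integrable (fun x => x ^ i * a x * f x) (volume.restrict (Set.Ioi (0:ℝ))) := by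
    refine int_helper _ ((hmx.mul ha_meas).mul hf_meas).aestronglyMeasurable
      (hx_ae.mono fun x hx => by
        exact mul_nonneg (mul_nonneg (Real.rpow_nonneg (le_of_lt hx) i) (ha_nonneg x))
          (hf_nonneg x))
      (hx_ae.mono fun x hx => ?_)
    have h1 : 0 ≤ x ^ i := Real.rpow_nonneg (le_of_lt hx) i
    nlinarith [mul_nonneg h1 (hf_nonneg x), ha_nonneg x]
  have I2 : Integrable (fun x => x ^ i * f x) (volume.restrict (Set.Ioi (0:ℝ))) := by
    refine int_helper _ (hmx.mul hf_meas).aestronglyMeasurable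
      (hx_ae.mono fun x hx => mul_nonneg (Real.rpow_nonneg (le_of_lt hx) i) (hf_nonneg x))
      (hx_ae.mono fun x hx => ?_)
    have h1 : 0 ≤ x ^ i := Real.rpow_nonneg (le_of_lt hx) i
    nlinarith [mul_nonneg h1 (hf_nonneg x), ha_nonneg x]
  have sm_n : StronglyMeasurable (fun y => nmom b i y) := sm_nmom hb_meas
  have I4 : Integrable (fun y => a y * f y * nmom b i y) (volume.restrict (Set.Ioi (0:ℝ))) := by
    refine int_helper _
      (((ha_meas.mul hf_meas).stronglyMeasurable.mul sm_n).aestronglyMeasurable)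
      (hx_ae.mono fun y hy => mul_nonneg (mul_nonneg (ha_nonneg y) (hf_nonneg y))
        (nmom_nonneg hb_nonneg y))
      (hx_ae.mono fun y hy => ?_)
    have h1 : nmom b i y ≤ y ^ i := nmom_le hi1 hb_meas hb_nonneg hb_mass hy
    have h2 : 0 ≤ a y * f y := mul_nonneg (ha_nonneg y) (hf_nonneg y)
    have h3 : 0 ≤ y ^ i := Real.rpow_nonneg (le_of_lt hy) i
    nlinarith [mul_nonneg h3 (hf_nonneg y)]
  have I5 : Integrable (fun x => Nmom b i x * a x * f x) (volume.restrict (Set.Ioi (0:ℝ))) := by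
    refine int_helper _
      ((((hmx.stronglyMeasurable.sub sm_n).mul ha_meas.stronglyMeasurable).mul
        hf_meas.stronglyMeasurable).aestronglyMeasurable)
      (hx_ae.mono fun x hx => mul_nonneg (mul_nonneg
        (Nmom_nonneg hi1 hb_meas hb_nonneg hb_mass hx) (ha_nonneg x)) (hf_nonneg x))
      (hx_ae.mono fun x hx => ?_)
    have h1 : Nmom b i x ≤ x ^ i := Nmom_le hb_nonneg x
    have h2 : 0 ≤ Nmom b i x := Nmom_nonneg hi1 hb_meas hb_nonneg hb_mass hx
    have h3 : 0 ≤ x ^ i := Real.rpow_nonneg (le_of_lt hx) i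
    nlinarith [mul_nonneg (ha_nonneg x) (hf_nonneg x), mul_nonneg h3 (hf_nonneg x),
      ha_nonneg x, hf_nonneg x]
  ------------------------------------------------------------------
  -- PART 1 : Fubini
  ------------------------------------------------------------------
  -- the double-integral kernel
  set φ : ℝ → ℝ → ℝ≥0∞ := fun x y =>
    if 0 < x ∧ x < y then ENNReal.ofReal (x ^ i * (a y * b x y * f y)) else 0 with hφ
  have hφ_meas : Measurable (Function.uncurry φ) := by
    refine Measurable.ite ?_ ?_ measurable_const
    · exact (measurableSet_lt measurable_const measurable_fst).inter
        (measurableSet_lt measurable_fst measurable_snd)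
    · refine Measurable.ennreal_ofReal ?_
      refine ((by fun_prop : Measurable fun p : ℝ × ℝ => p.1 ^ i)).mul ?_
      exact ((ha_meas.comp measurable_snd).mul hb_meas).mul (hf_meas.comp measurable_snd)
  have hswap : (∫⁻ x, ∫⁻ y, φ x y) = ∫⁻ y, ∫⁻ x, φ x y :=
    lintegral_lintegral_swap hφ_meas.aemeasurable
  -- RHS of swap
  have hB : (∫⁻ y, ∫⁻ x, φ x y)
      = ∫⁻ y in Set.Ioi (0:ℝ), ENNReal.ofReal (a y * f y * nmom b i y) := by
    rw [← lintegral_indicator measurableSet_Ioi]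
    refine lintegral_congr fun y => ?_
    by_cases hy : 0 < y
    · have h1 : (fun x => φ x y)
          = (Set.Ioo (0:ℝ) y).indicator
              (fun x => ENNReal.ofReal (a y * f y * (x ^ i * b x y))) := by
        funext x
        simp only [hφ, Set.indicator_apply, Set.mem_Ioo]
        split_ifs with h
        · congr 1; ring
        · rfl
      rw [h1, lintegral_indicator measurableSet_Ioo]
      have h2 : ∀ x, ENNReal.ofReal (a y * f y * (x ^ i * b x y))
          = ENNReal.ofReal (a y * f y) * ENNReal.ofReal (x ^ i * b x y) := fun x =>
        ENNReal.ofReal_mul (mul_nonneg (ha_nonneg y) (hf_nonneg y))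
      simp_rw [h2]
      rw [lintegral_const_mul (f := fun x => ENNReal.ofReal (x ^ i * b x y)) _
        ((hmx.mul (meas_b_left hb_meas y)).ennreal_ofReal)]
      rw [← ofReal_integral_eq_lintegral_ofReal
        (integrable_xib hi1 hb_meas hb_nonneg hb_mass hy)
        ((ae_restrict_mem measurableSet_Ioo).mono fun x hx =>
          mul_nonneg (Real.rpow_nonneg hx.1.le i) (hb_nonneg x y))]
      rw [← ENNReal.ofReal_mul (mul_nonneg (ha_nonneg y) (hf_nonneg y))]
      rw [Set.indicator_of_mem (Set.mem_Ioi.mpr hy)]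
      rfl
    · have h1 : ∀ x, φ x y = 0 := by
        intro x
        simp only [hφ]
        rw [if_neg]
        rintro ⟨hx1, hx2⟩
        exact hy (lt_trans hx1 hx2)
      simp only [h1, lintegral_zero]
      rw [Set.indicator_of_notMem (by simpa using hy)]
  -- the inner lintegral in y
  set J : ℝ → ℝ≥0∞ := fun x => ∫⁻ y in Set.Ioi x, ENNReal.ofReal (a y * b x y * f y)
    with hJdef
  have hJ_meas : Measurable J := by
    have hg : Measurable fun q : ℝ × ℝ =>
        Set.indicator {q : ℝ × ℝ | q.1 < q.2}
          (fun q => ENNReal.ofReal (a q.2 * b q.1 q.2 * f q.2)) q := by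
      refine Measurable.indicator ?_ (measurableSet_lt measurable_fst measurable_snd)
      exact ((((ha_meas.comp measurable_snd).mul hb_meas).mul
        (hf_meas.comp measurable_snd))).ennreal_ofReal
    have h2 := hg.lintegral_prod_right' (ν := (volume : Measure ℝ))
    have heq : J = fun x => ∫⁻ y, Set.indicator {q : ℝ × ℝ | q.1 < q.2}
        (fun q => ENNReal.ofReal (a q.2 * b q.1 q.2 * f q.2)) (x, y) := by
      funext x
      show (∫⁻ y in Set.Ioi x, ENNReal.ofReal (a y * b x y * f y)) = _
      rw [← lintegral_indicator measurableSet_Ioi]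
      congr 1
    rw [heq]
    exact h2
  -- LHS of swap
  have hA : (∫⁻ x, ∫⁻ y, φ x y)
      = ∫⁻ x in Set.Ioi (0:ℝ), ENNReal.ofReal (x ^ i) * J x := by
    rw [← lintegral_indicator measurableSet_Ioi]
    refine lintegral_congr fun x => ?_
    by_cases hx : 0 < x
    · have h1 : (fun y => φ x y)
          = (Set.Ioi x).indicator
              (fun y => ENNReal.ofReal (x ^ i) * ENNReal.ofReal (a y * b x y * f y)) := by
        funext y
        simp only [hφ, Set.indicator_apply, Set.mem_Ioi]
        split_ifs with h h2 h2
        · exact (ENNReal.ofReal_mul (Real.rpow_nonneg hx.le i))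
        · exact absurd h.2 h2
        · exact absurd ⟨hx, h2⟩ h
        · rfl
      rw [h1, lintegral_indicator measurableSet_Ioi,
        lintegral_const_mul (f := fun y => ENNReal.ofReal (a y * b x y * f y)) _
          (((ha_meas.mul (meas_b_right hb_meas x)).mul hf_meas).ennreal_ofReal)]
      rw [Set.indicator_of_mem (Set.mem_Ioi.mpr hx)]
    · have h1 : ∀ y, φ x y = 0 := by
        intro y
        simp only [hφ]
        rw [if_neg]
        rintro ⟨hx1, _⟩
        exact hx hx1
      simp only [h1, lintegral_zero]
      rw [Set.indicator_of_notMem (by simpa using hx)]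
  have key : (∫⁻ x in Set.Ioi (0:ℝ), ENNReal.ofReal (x ^ i) * J x)
      = ∫⁻ y in Set.Ioi (0:ℝ), ENNReal.ofReal (a y * f y * nmom b i y) := by
    rw [← hA, hswap, hB]
  have hR_eq : (∫⁻ y in Set.Ioi (0:ℝ), ENNReal.ofReal (a y * f y * nmom b i y))
      = ENNReal.ofReal (∫ y in Set.Ioi (0:ℝ), a y * f y * nmom b i y) :=
    (ofReal_integral_eq_lintegral_ofReal I4
      (hx_ae.mono fun y hy => mul_nonneg (mul_nonneg (ha_nonneg y) (hf_nonneg y))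
        (nmom_nonneg hb_nonneg y))).symm
  have hR_fin : (∫⁻ y in Set.Ioi (0:ℝ), ENNReal.ofReal (a y * f y * nmom b i y)) < ∞ := by
    rw [hR_eq]; exact ENNReal.ofReal_lt_top
  -- a.e. finiteness of the inner integral
  have hJ_ae : ∀ᵐ x ∂(volume.restrict (Set.Ioi (0:ℝ))), ENNReal.ofReal (x ^ i) * J x < ∞ := by
    refine ae_lt_top (hmx.ennreal_ofReal.mul hJ_meas) ?_
    rw [key, hR_eq]; exact ENNReal.ofReal_ne_top
  -- inner real integral
  set Iin : ℝ → ℝ := fun x => ∫ y in Set.Ioi x, a y * b x y * f y with hIin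
  have hIin_nonneg : ∀ x, 0 ≤ Iin x := fun x =>
    setIntegral_nonneg measurableSet_Ioi fun y _ =>
      mul_nonneg (mul_nonneg (ha_nonneg y) (hb_nonneg x y)) (hf_nonneg y)
  have hIin_sm : StronglyMeasurable Iin := by
    have hg : StronglyMeasurable fun q : ℝ × ℝ =>
        Set.indicator {q : ℝ × ℝ | q.1 < q.2}
          (fun q => a q.2 * b q.1 q.2 * f q.2) q := by
      refine (Measurable.indicator ?_
        (measurableSet_lt measurable_fst measurable_snd)).stronglyMeasurable
      exact ((ha_meas.comp measurable_snd).mul hb_meas).mul (hf_meas.comp measurable_snd)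
    have h2 := hg.integral_prod_right' (ν := (volume : Measure ℝ))
    have heq : Iin = fun x => ∫ y, Set.indicator {q : ℝ × ℝ | q.1 < q.2}
        (fun q => a q.2 * b q.1 q.2 * f q.2) (x, y) := by
      funext x
      show (∫ y in Set.Ioi x, a y * b x y * f y) = _
      rw [← integral_indicator (measurableSet_Ioi : MeasurableSet (Set.Ioi x))]
      congr 1
    rw [heq]
    exact h2
  -- a.e. : ofReal (x^i * Iin x) = ofReal(x^i) * J x
  have hae_eq : ∀ᵐ x ∂(volume.restrict (Set.Ioi (0:ℝ))), ENNReal.ofReal (x ^ i * Iin x)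
      = ENNReal.ofReal (x ^ i) * J x := by
    filter_upwards [hx_ae, hJ_ae] with x hx hfin
    have hxi : (0:ℝ) < x ^ i := Real.rpow_pos_of_pos hx i
    have hJfin : J x < ∞ := by
      by_contra h
      rw [not_lt, top_le_iff] at h
      rw [h, ENNReal.mul_top (by simp [ENNReal.ofReal_eq_zero, not_le, hxi])] at hfin
      exact (lt_irrefl _ hfin)
    have hint : Integrable (fun y => a y * b x y * f y) (volume.restrict (Set.Ioi x)) := by
      refine ⟨(((ha_meas.mul (meas_b_right hb_meas x)).mul
        hf_meas)).aestronglyMeasurable, ?_⟩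
      rw [hasFiniteIntegral_iff_ofReal (Eventually.of_forall fun y =>
        mul_nonneg (mul_nonneg (ha_nonneg y) (hb_nonneg x y)) (hf_nonneg y))]
      exact hJfin
    have h2 : ENNReal.ofReal (Iin x) = J x :=
      ofReal_integral_eq_lintegral_ofReal hint (Eventually.of_forall fun y =>
        mul_nonneg (mul_nonneg (ha_nonneg y) (hb_nonneg x y)) (hf_nonneg y))
    rw [ENNReal.ofReal_mul hxi.le, h2]
  have key2 : (∫⁻ x in Set.Ioi (0:ℝ), ENNReal.ofReal (x ^ i * Iin x))
      = ENNReal.ofReal (∫ y in Set.Ioi (0:ℝ), a y * f y * nmom b i y) := by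
    rw [lintegral_congr_ae hae_eq, key, hR_eq]
  have I6 : Integrable (fun x => x ^ i * Iin x) (volume.restrict (Set.Ioi (0:ℝ))) := by
    refine ⟨(hmx.stronglyMeasurable.mul hIin_sm).aestronglyMeasurable, ?_⟩
    rw [hasFiniteIntegral_iff_ofReal (hx_ae.mono fun x hx =>
      mul_nonneg (Real.rpow_nonneg (le_of_lt hx) i) (hIin_nonneg x))]
    rw [key2]
    exact ENNReal.ofReal_lt_top
  have part1core : (∫ x in Set.Ioi (0:ℝ), x ^ i * Iin x)
      = ∫ y in Set.Ioi (0:ℝ), a y * f y * nmom b i y := by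
    have h1 : (0:ℝ) ≤ ∫ x in Set.Ioi (0:ℝ), x ^ i * Iin x :=
      integral_nonneg_of_ae (hx_ae.mono fun x hx =>
        mul_nonneg (Real.rpow_nonneg (le_of_lt hx) i) (hIin_nonneg x))
    have h2 : (0:ℝ) ≤ ∫ y in Set.Ioi (0:ℝ), a y * f y * nmom b i y :=
      integral_nonneg_of_ae (hx_ae.mono fun y hy =>
        mul_nonneg (mul_nonneg (ha_nonneg y) (hf_nonneg y)) (nmom_nonneg hb_nonneg y))
    have h4 : ENNReal.ofReal (∫ x in Set.Ioi (0:ℝ), x ^ i * Iin x)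
        = ∫⁻ x in Set.Ioi (0:ℝ), ENNReal.ofReal (x ^ i * Iin x) :=
      ofReal_integral_eq_lintegral_ofReal I6 (hx_ae.mono fun x hx =>
        mul_nonneg (Real.rpow_nonneg (le_of_lt hx) i) (hIin_nonneg x))
    exact (ENNReal.ofReal_eq_ofReal_iff h1 h2).mp (h4.trans key2)
  have part1 : (∫ x in Set.Ioi (0:ℝ), x ^ i * fragOp a b f x)
      = -∫ x in Set.Ioi (0:ℝ), Nmom b i x * a x * f x := by
    have hpt : ∀ x, x ^ i * fragOp a b f x
        = x ^ i * Iin x - x ^ i * a x * f x := by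
      intro x
      simp only [fragOp, hIin]
      ring
    rw [integral_congr_ae (Eventually.of_forall hpt)]
    rw [integral_sub I6 I1, part1core]
    have hpt2 : ∀ x, Nmom b i x * a x * f x
        = x ^ i * a x * f x - a x * f x * nmom b i x := by
      intro x; simp only [Nmom]; ring
    rw [integral_congr_ae (Eventually.of_forall hpt2), integral_sub I1 I4]
    ring
  refine ⟨part1, ?_⟩
  ------------------------------------------------------------------
  -- PART 2 : the inequality
  ------------------------------------------------------------------
  set M := essSup a (volume.restrict (Set.Ioc (0:ℝ) 1)) with hMdef
  have hM_ae : ∀ᵐ x ∂(volume.restrict (Set.Ioc (0:ℝ) 1)), a x ≤ M :=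
    eventually_le_limsup ha_bdd
  have hne : (volume.restrict (Set.Ioc (0:ℝ) 1)) ≠ 0 := by
    simp [Measure.restrict_eq_zero, Real.volume_Ioc]
  have : NeBot (MeasureTheory.ae (volume.restrict (Set.Ioc (0:ℝ) 1))) :=
    ae_neBot.mpr hne
  have hM0 : 0 ≤ M := by
    obtain ⟨x, hx⟩ := hM_ae.exists
    exact le_trans (ha_nonneg x) hx
  -- split integrals
  have hIocsub : Set.Ioc (0:ℝ) 1 ⊆ Set.Ioi 0 := fun x hx => hx.1
  have hIoisub : Set.Ioi (1:ℝ) ⊆ Set.Ioi 0 := fun x hx => show (0:ℝ) < x from lt_trans one_pos hx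
  have split_gen : ∀ g : ℝ → ℝ, Integrable g (volume.restrict (Set.Ioi (0:ℝ))) →
      (∫ x in Set.Ioi (0:ℝ), g x)
        = (∫ x in Set.Ioc (0:ℝ) 1, g x) + ∫ x in Set.Ioi (1:ℝ), g x := by
    intro g hg
    rw [← setIntegral_union (Set.Ioc_disjoint_Ioi le_rfl) measurableSet_Ioi
      (hg.mono_measure (Measure.restrict_mono hIocsub le_rfl))
      (hg.mono_measure (Measure.restrict_mono hIoisub le_rfl)),
      Set.Ioc_union_Ioi_eq_Ioi zero_le_one]
  have hsplitN := split_gen _ I5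
  have hsplitA := split_gen _ I1
  -- piece 1 : Ioc part of N is nonneg
  have h1 : 0 ≤ ∫ x in Set.Ioc (0:ℝ) 1, Nmom b i x * a x * f x :=
    setIntegral_nonneg measurableSet_Ioc fun x hx =>
      mul_nonneg (mul_nonneg (Nmom_nonneg hi1 hb_meas hb_nonneg hb_mass hx.1)
        (ha_nonneg x)) (hf_nonneg x)
  -- piece 2 : Ioi 1 part
  have hN' : ∀ᵐ x ∂(volume.restrict (Set.Ioi (1:ℝ))), δ * x ^ i ≤ Nmom b i x :=
    ae_restrict_of_ae_restrict_of_subset Set.Ioi_subset_Ici_self hN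
  have h2 : δ * (∫ x in Set.Ioi (1:ℝ), x ^ i * a x * f x)
      ≤ ∫ x in Set.Ioi (1:ℝ), Nmom b i x * a x * f x := by
    rw [← integral_const_mul]
    refine integral_mono_ae
      ((I1.mono_measure (Measure.restrict_mono hIoisub le_rfl)).const_mul δ)
      (I5.mono_measure (Measure.restrict_mono hIoisub le_rfl)) ?_
    filter_upwards [hN', ae_restrict_mem measurableSet_Ioi] with x hNx hx
    have haf : 0 ≤ a x * f x := mul_nonneg (ha_nonneg x) (hf_nonneg x)
    calc δ * (x ^ i * a x * f x) = (δ * x ^ i) * (a x * f x) := by ring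
      _ ≤ Nmom b i x * (a x * f x) := mul_le_mul_of_nonneg_right hNx haf
      _ = Nmom b i x * a x * f x := by ring
  -- piece 3 : small-x part of A bounded via essSup
  have h3 : (∫ x in Set.Ioc (0:ℝ) 1, x ^ i * a x * f x)
      ≤ M * ∫ x in Set.Ioc (0:ℝ) 1, x ^ i * f x := by
    rw [← integral_const_mul]
    refine integral_mono_ae (I1.mono_measure (Measure.restrict_mono hIocsub le_rfl))
      ((I2.mono_measure (Measure.restrict_mono hIocsub le_rfl)).const_mul M) ?_
    filter_upwards [hM_ae, ae_restrict_mem measurableSet_Ioc] with x hax hx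
    have hxf : 0 ≤ x ^ i * f x :=
      mul_nonneg (Real.rpow_nonneg hx.1.le i) (hf_nonneg x)
    calc x ^ i * a x * f x = a x * (x ^ i * f x) := by ring
      _ ≤ M * (x ^ i * f x) := mul_le_mul_of_nonneg_right hax hxf
  -- piece 4
  have h4 : (∫ x in Set.Ioc (0:ℝ) 1, x ^ i * f x)
      ≤ ∫ x in Set.Ioi (0:ℝ), x ^ i * f x := by
    refine setIntegral_mono_set I2 ?_ (HasSubset.Subset.eventuallyLE hIocsub)
    exact hx_ae.mono fun x hx =>
      mul_nonneg (Real.rpow_nonneg (le_of_lt hx) i) (hf_nonneg x)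
  have h5 : 0 ≤ ∫ x in Set.Ioi (0:ℝ), x ^ i * f x :=
    integral_nonneg_of_ae (hx_ae.mono fun x hx =>
      mul_nonneg (Real.rpow_nonneg (le_of_lt hx) i) (hf_nonneg x))
  -- expand (a+ω) x^i f
  have hexp : (∫ x in Set.Ioi (0:ℝ), (a x + ω) * x ^ i * f x)
      = (∫ x in Set.Ioi (0:ℝ), x ^ i * a x * f x)
        + ω * ∫ x in Set.Ioi (0:ℝ), x ^ i * f x := by
    have hpt : ∀ x, (a x + ω) * x ^ i * f x
        = x ^ i * a x * f x + ω * (x ^ i * f x) := fun x => by ring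
    rw [integral_congr_ae (Eventually.of_forall hpt), integral_add I1 (I2.const_mul ω),
      integral_const_mul]
  -- final arithmetic
  rw [hexp]
  have k1 : δ * (∫ x in Set.Ioc (0:ℝ) 1, x ^ i * a x * f x)
      ≤ δ * (M * ∫ x in Set.Ioc (0:ℝ) 1, x ^ i * f x) :=
    mul_le_mul_of_nonneg_left h3 hδ.le
  have k2 : δ * M * (∫ x in Set.Ioc (0:ℝ) 1, x ^ i * f x)
      ≤ δ * M * ∫ x in Set.Ioi (0:ℝ), x ^ i * f x :=
    mul_le_mul_of_nonneg_left h4 (mul_nonneg hδ.le hM0)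
  have k3 : δ * (∫ x in Set.Ioi (1:ℝ), x ^ i * a x * f x)
      = δ * (∫ x in Set.Ioi (0:ℝ), x ^ i * a x * f x)
        - δ * ∫ x in Set.Ioc (0:ℝ) 1, x ^ i * a x * f x := by
    rw [hsplitA]; ring
  nlinarith [h2, h1, k1, k2, k3, hsplitN, mul_nonneg hω.le h5]
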